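/- The base-3 values of the zeroth column of the grid are strictly increasing: for all natural numbers j < i, [G(j,0)]_3 < [G(i,0)]_3. -/

import Mathlib

abbrev Digit := Fin 3

/-- Base-3 value of a digit string (most significant digit first). -/
def val3 (w : List Digit) : ℕ := w.foldl (fun acc d => 3 * acc + d.val) 0

/-- Helper for `addTwo`, acting on the reversed (least significant digit first) string:
replace each digit `d` by `d - 1 (mod 3)` up to and including the first digit 0;
if no digit 0 occurs, a digit 0 is first prepended at the most significant end
(and then becomes 2). -/
def addTwoAux : List Digit → List Digit
  | [] => [2]
  | d :: rest => if d = 0 then (d + 2) :: rest else (d + 2) :: addTwoAux rest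

/-- Adding two in base 3/2: all digits at or to the right of the rightmost 0
(including that 0) are decreased by 1 modulo 3; if there is no 0, a 0 is first
prepended. -/
def addTwo (w : List Digit) : List Digit := (addTwoAux w.reverse).reverse

/-- Binary representation of `j` (digits 0 and 1, most significant first, no leading
zeros), with `binRep 0 = [0]`. -/
def binRep (j : ℕ) : List Digit :=
  if j = 0 then [0] else (Nat.digits 2 j).reverse.map (fun (d : ℕ) => (Fin.ofNat 3 d : Digit))

/-- The grid: row 0 consists of the binary representations in increasing order, and
each subsequent row is obtained entrywise by adding two in base 3/2. -/
def G : ℕ → ℕ → List Digit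
  | 0, j => binRep j
  | i + 1, j => addTwo (G i j)


/-- Value of a reversed digit string (least significant first). -/
def valR : List Digit → ℕ
  | [] => 0
  | d :: rest => d.val + 3 * valR rest

lemma valR_append (l : List Digit) (d : Digit) :
    valR (l ++ [d]) = valR l + d.val * 3 ^ l.length := by
  induction l with
  | nil => simp [valR]
  | cons e l ih => simp [valR, ih, pow_succ]; ring

lemma val3_foldl (w : List Digit) (a : ℕ) :
    w.foldl (fun acc d => 3 * acc + d.val) a = a * 3 ^ w.length + valR w.reverse := by
  induction w generalizing a with
  | nil => simp [valR]
  | cons d w ih =>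
      simp only [List.foldl_cons, ih, List.reverse_cons, valR_append,
        List.length_cons, List.length_reverse, pow_succ]
      ring

lemma val3_eq_valR (w : List Digit) : val3 w = valR w.reverse := by
  simp [val3, val3_foldl]

lemma valR_addTwoAux (l : List Digit) : valR l + 2 ≤ valR (addTwoAux l) := by
  induction l with
  | nil => simp [addTwoAux, valR]
  | cons d rest ih =>
      by_cases hd : d = 0
      · subst hd
        simp [addTwoAux, valR]; omega
      · have h1 : (d + 2 : Digit).val = (d.val + 2) % 3 := by
          simp [Fin.add_def]
        have h2 : d.val < 3 := d.isLt
        have h3 : d.val ≠ 0 := fun h => hd (Fin.ext h)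
        simp only [addTwoAux, if_neg hd, valR, h1]
        omega

lemma val3_addTwo (w : List Digit) : val3 w < val3 (addTwo w) := by
  rw [val3_eq_valR, val3_eq_valR, addTwo, List.reverse_reverse]
  have := valR_addTwoAux w.reverse
  omega

/-- The base-3 values of the zeroth column of the grid are strictly increasing. -/
theorem zeroth_column_strict_mono (j i : ℕ) (h : j < i) :
    val3 (G j 0) < val3 (G i 0) := by
  have : StrictMono (fun i => val3 (G i 0)) :=
    strictMono_nat_of_lt_succ (fun n => val3_addTwo (G n 0))
  exact this h
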